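/- Let G be a group, let lambda be a central element of G of infinite order, and let x, y in G be elements such that x^2 is central and x*y*x^{-1}*y^{-1} = lambda^k for some integer k. Then k = 0; in particular x and y commute. -/

import Mathlib

/-- If `lam` is central of infinite order, `x ^ 2` is central, and
`x * y * x⁻¹ * y⁻¹ = lam ^ k`, then `k = 0` and `x`, `y` commute. -/
theorem stmt2 {G : Type*} [Group G] (lam : G) (hcentral : lam ∈ Subgroup.center G)
    (hinf : ¬ IsOfFinOrder lam) (x y : G) (hx2 : x ^ 2 ∈ Subgroup.center G)
    (k : ℤ) (h : x * y * x⁻¹ * y⁻¹ = lam ^ k) :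
    k = 0 ∧ Commute x y := by
  rw [Subgroup.mem_center_iff] at hcentral hx2
  have hlam : ∀ g : G, Commute g (lam ^ k) :=
    fun g => (Commute.zpow_right (hcentral g) k)
  have hconj : x * y * x⁻¹ = lam ^ k * y := by
    rw [← h]; group
  have h2 : x ^ 2 * y * (x ^ 2)⁻¹ = lam ^ (2 * k) * y := by
    have e1 : x ^ 2 * y * (x ^ 2)⁻¹ = x * (x * y * x⁻¹) * x⁻¹ := by
      simp [pow_two, mul_inv_rev, mul_assoc]
    rw [e1, hconj, ← mul_assoc, (hlam x).eq, mul_assoc, mul_assoc, ← mul_assoc x y, hconj,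
      ← mul_assoc, ← zpow_add, two_mul]
  have h3 : lam ^ (2 * k) = 1 := by
    have hy : x ^ 2 * y * (x ^ 2)⁻¹ = y := by
      rw [← hx2 y, mul_inv_cancel_right]
    rw [hy] at h2
    have := h2.symm
    rwa [mul_eq_right] at this
  have hk : k = 0 := by
    have hinj := injective_zpow_iff_not_isOfFinOrder.mpr hinf
    have : (2 : ℤ) * k = 0 := hinj (by simpa using h3)
    omega
  refine ⟨hk, ?_⟩
  subst hk
  simp only [zpow_zero] at h
  have h' : x * y = y * x := by
    have h5 : x * y * x⁻¹ * y⁻¹ * (y * x) = 1 * (y * x) := by rw [h]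
    group at h5
    simpa using h5
  exact h'
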